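/- Let c be a real number with 1 ≤ c < 3 + 2√2, and let x : ℕ → ℝ satisfy x 0 = 1, x 1 = c, and x (n+2) = (c + 1) · x (n+1) − 2c · x n for all n ∈ ℕ. Then there exists m ∈ ℕ such that x (m+2) ≤ x (m+1). (Because the characteristic polynomial has two complex roots for such c, the adversary's job-length sequence cannot increase strictly forever.) -/

import Mathlib

theorem adversary_sequence_eventually_nonincreasing (c : ℝ)
    (hc1 : 1 ≤ c) (hc2 : c < 3 + 2 * Real.sqrt 2) (x : ℕ → ℝ)
    (h0 : x 0 = 1) (h1 : x 1 = c)
    (hrec : ∀ n : ℕ, x (n + 2) = (c + 1) * x (n + 1) - 2 * c * x n) :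
    ∃ m : ℕ, x (m + 2) ≤ x (m + 1) := by
  by_contra hcon
  push_neg at hcon
  have hs2 : Real.sqrt 2 ^ 2 = 2 := Real.sq_sqrt (by norm_num)
  have hs0 : (0:ℝ) ≤ Real.sqrt 2 := Real.sqrt_nonneg 2
  have hs1 : (1:ℝ) < Real.sqrt 2 := by nlinarith
  have hcp : (0:ℝ) < c + 1 := by linarith
  have hε : 0 < 2*c - (c+1)^2/4 := by
    have hf1 : 0 < 3 + 2*Real.sqrt 2 - c := by linarith
    have hf2 : 0 < c - 3 + 2*Real.sqrt 2 := by linarith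
    nlinarith [mul_pos hf1 hf2]
  set δ : ℝ := (2*c - (c+1)^2/4) / (c+1) with hδdef
  have hδ : 0 < δ := div_pos hε hcp
  have hδε : δ * (c+1) = 2*c - (c+1)^2/4 := div_mul_cancel₀ _ (ne_of_gt hcp)
  have hpos : ∀ n, 1 ≤ x n := by
    intro n
    induction n with
    | zero => rw [h0]
    | succ k ih =>
      cases k with
      | zero => rw [h1]; exact hc1
      | succ j =>
        have := hcon j
        linarith
  have hmono : ∀ n, x n ≤ x (n+1) := by
    intro n
    cases n with
    | zero => rw [h0, h1]; linarith
    | succ j => exact (hcon j).le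
  have hkey : ∀ n : ℕ, x (n+1) ≤ (c - n*δ) * x n := by
    intro n
    induction n with
    | zero => simp [h0, h1]
    | succ k ih =>
      have hxk := hpos k
      have hxk1 := hpos (k+1)
      have hmk := hmono k
      have hkδ : (0:ℝ) ≤ (k:ℝ)*δ := mul_nonneg (Nat.cast_nonneg k) hδ.le
      have ht1 : (1:ℝ) ≤ c - (k:ℝ)*δ := by nlinarith [ih]
      have hq : δ * (c - (k:ℝ)*δ) ≤ (c - (k:ℝ)*δ)^2 - (c+1)*(c - (k:ℝ)*δ) + 2*c := by
        nlinarith [sq_nonneg ((c - (k:ℝ)*δ) - (c+1)/2), hδε,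
          mul_nonneg hδ.le (by linarith : (0:ℝ) ≤ c + 1 - (c - (k:ℝ)*δ))]
      rw [hrec k]
      push_cast
      nlinarith [mul_le_mul_of_nonneg_left ih
          (by linarith : (0:ℝ) ≤ c + 1 - (c - (k:ℝ)*δ) + δ),
        mul_le_mul_of_nonneg_right hq (by linarith : (0:ℝ) ≤ x k)]
  obtain ⟨n, hn⟩ := exists_nat_gt ((c-1)/δ)
  have h1n : c - (n:ℝ)*δ < 1 := by
    rw [div_lt_iff₀ hδ] at hn
    linarith
  have hk := hkey n
  have hm := hmono n
  have hp := hpos n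
  nlinarith [mul_lt_mul_of_pos_right h1n (by linarith : (0:ℝ) < x n)]
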